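/- Let σ be an interval model of G+F where F is an inclusion-wise minimal completion of G, and let v₁, v₂ be vertices such that σ(end v₁) = σ(beg v₂) + 1 (the ending event of v₁ immediately follows the starting event of v₂). Then v₁ and v₂ are adjacent in G or v₁ = v₂. -/

import Mathlib

/-- A combinatorial interval model of a graph `G`: an injection from the `2n` events
`beg v` (encoded `Sum.inl v`) and `end v` (encoded `Sum.inr v`) onto the positions
`{1, …, 2n}` such that each interval starts before it ends, and two distinct
vertices are non-adjacent iff their intervals are disjoint. -/
structure IntervalModel {V : Type*} [Fintype V] (G : SimpleGraph V) where
  σ : V ⊕ V → ℕ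
  inj : Function.Injective σ
  lb : ∀ e, 1 ≤ σ e
  ub : ∀ e, σ e ≤ 2 * Fintype.card V
  surj : ∀ i : ℕ, 1 ≤ i → i ≤ 2 * Fintype.card V → ∃ e, σ e = i
  begEnd : ∀ v, σ (Sum.inl v) < σ (Sum.inr v)
  adjIff : ∀ u v, u ≠ v →
    (¬ G.Adj u v ↔ σ (Sum.inr v) < σ (Sum.inl u) ∨ σ (Sum.inr u) < σ (Sum.inl v))

/-- The section of an interval model at position `p`:
vertices whose interval is "pinned" just after position `p`. -/
def intervalSection {V : Type*} [Fintype V] {G : SimpleGraph V}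
    (M : IntervalModel G) (p : ℕ) : Set V :=
  {v | M.σ (Sum.inl v) ≤ p ∧ p < M.σ (Sum.inr v)}

/-- The events of a set of vertices. -/
def eventsOf {V : Type*} (X : Set V) : Set (V ⊕ V) :=
  (Sum.inl : V → V ⊕ V) '' X ∪ (Sum.inr : V → V ⊕ V) '' X

/-- The vertex set (in the ambient graph) of a connected component of an induced subgraph. -/
def compSupp {V : Type*} {s : Set V} {H : SimpleGraph s}
    (c : H.ConnectedComponent) : Set V :=
  Subtype.val '' c.supp


private lemma swap_lt_iff {a m n : ℕ} (h1 : ¬(m = a ∧ n = a+1)) (h2 : ¬(m = a+1 ∧ n = a)) :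
    (Equiv.swap a (a+1) m < Equiv.swap a (a+1) n ↔ m < n) := by
  rcases eq_or_ne m a with hm|hm <;> rcases eq_or_ne n a with hn|hn <;>
  rcases eq_or_ne m (a+1) with hm'|hm' <;> rcases eq_or_ne n (a+1) with hn'|hn' <;>
  simp_all [Equiv.swap_apply_left, Equiv.swap_apply_right, Equiv.swap_apply_of_ne_of_ne] <;>
  omega

/-- Let `σ` be an interval model of `G + F` where `F` is an inclusion-wise minimal
completion of `G`, and suppose `σ(end v₁) = σ(beg v₂) + 1`. Then `v₁` and `v₂`
are adjacent in `G` or `v₁ = v₂`. -/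
theorem statement_11 {V : Type*} [Fintype V] (G F : SimpleGraph V)
    (hdisj : ∀ u v, F.Adj u v → ¬ G.Adj u v)
    (hmin : ∀ F' : SimpleGraph V, F' ≤ F → Nonempty (IntervalModel (G ⊔ F')) → F' = F)
    (M : IntervalModel (G ⊔ F)) (v₁ v₂ : V)
    (h : M.σ (Sum.inr v₁) = M.σ (Sum.inl v₂) + 1) :
    G.Adj v₁ v₂ ∨ v₁ = v₂ := by
  by_cases heq : v₁ = v₂
  · exact Or.inr heq
  by_cases hG : G.Adj v₁ v₂
  · exact Or.inl hG
  exfalso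
  -- first, (G ⊔ F).Adj v₁ v₂ must hold
  by_cases hGF : (G ⊔ F).Adj v₁ v₂
  case neg =>
    have := (M.adjIff v₁ v₂ heq).mp hGF
    have b1 := M.begEnd v₁
    have b2 := M.begEnd v₂
    omega
  have hF : F.Adj v₁ v₂ := by
    cases hGF with
    | inl h' => exact absurd h' hG
    | inr h' => exact h'
  set a := M.σ (Sum.inl v₂) with ha
  have hb : M.σ (Sum.inr v₁) = a + 1 := h
  have hne21 : v₂ ≠ v₁ := fun hc => heq hc.symm
  set F' : SimpleGraph V := F.deleteEdges {s(v₁, v₂)} with hF'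
  have hF'adj : ∀ u v, F'.Adj u v ↔ F.Adj u v ∧ ¬((u = v₁ ∧ v = v₂) ∨ (u = v₂ ∧ v = v₁)) := by
    intro u v
    simp only [hF', SimpleGraph.deleteEdges_adj, Set.mem_singleton_iff, Sym2.eq_iff]
  have hle : F' ≤ F := SimpleGraph.deleteEdges_le _
  -- build the swapped model
  set τ : V ⊕ V → ℕ := fun e => Equiv.swap a (a+1) (M.σ e) with hτ
  have hfix : ∀ e, e ≠ Sum.inl v₂ → e ≠ Sum.inr v₁ → τ e = M.σ e := by
    intro e h1 h2
    apply Equiv.swap_apply_of_ne_of_ne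
    · intro hc; exact h1 (M.inj hc)
    · intro hc; exact h2 (M.inj (hc.trans hb.symm))
  have hτ1 : τ (Sum.inl v₂) = a + 1 := by
    exact Equiv.swap_apply_left a (a+1)
  have hτ2 : τ (Sum.inr v₁) = a := by
    have : τ (Sum.inr v₁) = Equiv.swap a (a+1) (a+1) := by rw [hτ]; simp [hb]
    simpa [Equiv.swap_apply_right] using this
  have hne_inl : ∀ x : V, M.σ (Sum.inr x) ≠ a := by
    intro x hc
    exact (by simp : (Sum.inr x : V ⊕ V) ≠ Sum.inl v₂) (M.inj hc)
  have hne_inr : ∀ x : V, x ≠ v₁ → M.σ (Sum.inr x) ≠ a + 1 := by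
    intro x hx hc
    exact hx (Sum.inr.inj (M.inj (hc.trans hb.symm)))
  have key : ∀ x y : V, ¬(x = v₁ ∧ y = v₂) → (τ (Sum.inr x) < τ (Sum.inl y) ↔
      M.σ (Sum.inr x) < M.σ (Sum.inl y)) := by
    intro x y hxy
    apply swap_lt_iff
    · rintro ⟨h1, -⟩; exact hne_inl x h1
    · rintro ⟨h1, h2⟩
      have hx : x = v₁ := by
        by_contra hx; exact hne_inr x hx h1
      have hy : y = v₂ := Sum.inl.inj (M.inj h2)
      exact hxy ⟨hx, hy⟩
  have M' : IntervalModel (G ⊔ F') := by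
    refine ⟨τ, ?_, ?_, ?_, ?_, ?_, ?_⟩
    · exact (Equiv.swap a (a+1)).injective.comp M.inj
    · intro e
      rcases eq_or_ne e (Sum.inl v₂) with rfl|h1
      · rw [hτ1]; omega
      rcases eq_or_ne e (Sum.inr v₁) with rfl|h2
      · rw [hτ2]; have := M.lb (Sum.inl v₂); omega
      · rw [hfix e h1 h2]; exact M.lb e
    · intro e
      rcases eq_or_ne e (Sum.inl v₂) with rfl|h1
      · rw [hτ1]; have := M.ub (Sum.inr v₁); omega
      rcases eq_or_ne e (Sum.inr v₁) with rfl|h2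
      · rw [hτ2]; have := M.ub (Sum.inr v₁); omega
      · rw [hfix e h1 h2]; exact M.ub e
    · intro i h1 h2
      obtain ⟨e, he⟩ := M.surj (Equiv.swap a (a+1) i)
        (by
          rcases eq_or_ne i a with rfl|hi
          · rw [Equiv.swap_apply_left]; omega
          rcases eq_or_ne i (a+1) with rfl|hi'
          · rw [Equiv.swap_apply_right]; have := M.lb (Sum.inl v₂); omega
          · rw [Equiv.swap_apply_of_ne_of_ne hi hi']; omega)
        (by
          rcases eq_or_ne i a with rfl|hi
          · rw [Equiv.swap_apply_left]; have := M.ub (Sum.inr v₁); omega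
          rcases eq_or_ne i (a+1) with rfl|hi'
          · rw [Equiv.swap_apply_right]; have := M.ub (Sum.inr v₁); omega
          · rw [Equiv.swap_apply_of_ne_of_ne hi hi']; omega)
      exact ⟨e, by simp [hτ, he]⟩
    · intro v
      rcases eq_or_ne v₂ v with rfl|h2
      · rw [hτ1, hfix (Sum.inr v₂) (by simp) (by simp [hne21])]
        have := M.begEnd v₂
        have := hne_inr v₂ (fun hc => heq hc.symm)
        omega
      rcases eq_or_ne v₁ v with rfl|h1
      · rw [hτ2, hfix (Sum.inl v₁) (by simp [heq]) (by simp)]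
        have := M.begEnd v₁
        have : M.σ (Sum.inl v₁) ≠ a := fun hc => heq (Sum.inl.inj (M.inj hc))
        omega
      · rw [hfix (Sum.inl v) (by simp [h2.symm]) (by simp),
            hfix (Sum.inr v) (by simp) (by simp [h1.symm])]
        exact M.begEnd v
    · intro u v huv
      by_cases hc1 : u = v₁ ∧ v = v₂
      · obtain ⟨rfl, rfl⟩ := hc1
        constructor
        · intro _; right; rw [hτ2, hτ1]; omega
        · intro _
          simp only [SimpleGraph.sup_adj, not_or]
          exact ⟨hG, by rw [hF'adj]; tauto⟩
      by_cases hc2 : u = v₂ ∧ v = v₁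
      · obtain ⟨rfl, rfl⟩ := hc2
        constructor
        · intro _; left; rw [hτ2, hτ1]; omega
        · intro _
          simp only [SimpleGraph.sup_adj, not_or]
          refine ⟨fun hc => hG hc.symm, by rw [hF'adj]; tauto⟩
      · have hAdj : (G ⊔ F').Adj u v ↔ (G ⊔ F).Adj u v := by
          simp only [SimpleGraph.sup_adj, hF'adj]
          tauto
        rw [not_congr hAdj, M.adjIff u v huv,
            key v u (fun hc => hc2 ⟨hc.2, hc.1⟩), key u v hc1]
  have hFF : F' = F := hmin F' hle ⟨M'⟩
  have : F'.Adj v₁ v₂ := hFF ▸ hF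
  rw [hF'adj] at this
  tauto
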